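/- Let I = I(X) be the vanishing ideal of a finite set X of points in P^{s−1}, let ≺ be a graded monomial order, let f ∈ F_{≺,d}, and write in_≺(f) = t_1^{a_1} ⋯ t_s^{a_s}. If in_≺(I) is generated by t_2^{d_2},…,t_s^{d_s}, then there is r ≥ 2 such that a_r ≥ 1, a_i ≤ d_i − 1 for i ≥ r, a_i = 0 for 2 ≤ i < r, and |V_X(f)| ≤ d_2 ⋯ d_s − (d_2 − a_2) ⋯ (d_s − a_s). -/

import Mathlib

open MvPolynomial Finsupp Filter

namespace MDF

open scoped Classical

variable (K : Type*) [Field K] (s : ℕ)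

/-- The Hilbert function of `S/I` in degree `d`: `dim_K (S_d / I_d)`. -/
noncomputable def hilbertFn (I : Ideal (MvPolynomial (Fin s) K)) (d : ℕ) : ℕ :=
  Module.finrank K
    ((homogeneousSubmodule (Fin s) K d) ⧸
      (Submodule.comap (homogeneousSubmodule (Fin s) K d).subtype (I.restrictScalars K)))

/-- The Krull dimension of `S/I`, as a natural number. -/
noncomputable def krullDimQ (I : Ideal (MvPolynomial (Fin s) K)) : ℕ :=
  (((ringKrullDim (MvPolynomial (Fin s) K ⧸ I)).unbotD 0).untopD 0)

/-- The degree (multiplicity) of `S/I`: if `k = dim (S/I) ≥ 1`, it is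
`(k-1)! · lim_d H_I(d)/d^(k-1)`, and it is `dim_K (S/I)` if `k = 0`. -/
noncomputable def degQ (I : Ideal (MvPolynomial (Fin s) K)) : ℕ :=
  if krullDimQ K s I = 0 then Module.finrank K (MvPolynomial (Fin s) K ⧸ I)
  else Classical.epsilon (fun D : ℕ =>
    Tendsto (fun d : ℕ => (hilbertFn K s I d : ℝ) / (d : ℝ) ^ (krullDimQ K s I - 1)) atTop
      (nhds ((D : ℝ) / (Nat.factorial (krullDimQ K s I - 1)))))

/-- The regularity of the Hilbert function of `S/I`: the least `r ≥ 0` from which the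
Hilbert function agrees with a polynomial (necessarily the Hilbert polynomial). -/
noncomputable def regQ (I : Ideal (MvPolynomial (Fin s) K)) : ℕ :=
  sInf { r : ℕ | ∃ P : Polynomial ℚ, ∀ d : ℕ, r ≤ d → (hilbertFn K s I d : ℚ) = P.eval (d : ℚ) }

/-- The height of an ideal: the infimum of the heights of the primes containing it. -/
noncomputable def heightQ (I : Ideal (MvPolynomial (Fin s) K)) : ℕ∞ :=
  ⨅ p ∈ { p : PrimeSpectrum (MvPolynomial (Fin s) K) | I ≤ p.asIdeal }, Order.height p

/-- An ideal is a complete intersection if it can be generated by `ht(I)` elements. -/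
def IsCompleteIntersection (I : Ideal (MvPolynomial (Fin s) K)) : Prop :=
  ∃ (n : ℕ) (f : Fin n → MvPolynomial (Fin s) K),
    (n : ℕ∞) = heightQ K s I ∧ I = Ideal.span (Set.range f)

/-- An ideal is unmixed if all its associated primes have the same height. -/
def IsUnmixed (I : Ideal (MvPolynomial (Fin s) K)) : Prop :=
  ∀ p ∈ associatedPrimes (MvPolynomial (Fin s) K) (MvPolynomial (Fin s) K ⧸ I),
    ∀ q ∈ associatedPrimes (MvPolynomial (Fin s) K) (MvPolynomial (Fin s) K ⧸ I),
      heightQ K s p = heightQ K s q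

/-- A graded (homogeneous) ideal: it contains all homogeneous components of its elements. -/
def IsGradedIdeal (I : Ideal (MvPolynomial (Fin s) K)) : Prop :=
  ∀ f ∈ I, ∀ n : ℕ, homogeneousComponent n f ∈ I

variable {K s} in
/-- A graded monomial order: one refining the total degree. -/
def IsGradedOrder (m : MonomialOrder (Fin s)) : Prop :=
  ∀ a b : Fin s →₀ ℕ, a.degree < b.degree → m.toSyn a < m.toSyn b

variable {s} in
/-- The leading exponent (exponent of the leading monomial) of a polynomial with respect
to a monomial order.  (It is `0` by convention for the zero polynomial.) -/
noncomputable def lExp (m : MonomialOrder (Fin s)) (f : MvPolynomial (Fin s) K) :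
    Fin s →₀ ℕ :=
  m.toSyn.symm (f.support.sup (fun a => m.toSyn a))

variable {s} in
/-- The initial ideal of `I`: the ideal generated by the leading monomials of the nonzero
elements of `I`. -/
noncomputable def initIdeal (m : MonomialOrder (Fin s)) (I : Ideal (MvPolynomial (Fin s) K)) :
    Ideal (MvPolynomial (Fin s) K) :=
  Ideal.span { g | ∃ f ∈ I, f ≠ 0 ∧ g = monomial (lExp K m f) (1 : K) }

variable {s} in
/-- `f` is (or represents) a zero divisor of `S/I`. -/
def IsZeroDivOn (I : Ideal (MvPolynomial (Fin s) K)) (f : MvPolynomial (Fin s) K) : Prop :=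
  ∃ g, g ∉ I ∧ f * g ∈ I

variable {s} in
/-- The set `M_{≺,d}` of exponents of the standard monomials of degree `d` that are
zero divisors of `S/in_≺(I)`. -/
noncomputable def Mset (m : MonomialOrder (Fin s)) (I : Ideal (MvPolynomial (Fin s) K))
    (d : ℕ) : Set (Fin s →₀ ℕ) :=
  { a | a.degree = d ∧ monomial a (1 : K) ∉ initIdeal K m I ∧
      IsZeroDivOn K (initIdeal K m I) (monomial a (1 : K)) }

variable {s} in
/-- The set `F_{≺,d}` of nonzero zero divisors of `S/I` which are `K`-linear combinations
of standard monomials of degree `d`. -/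
noncomputable def Fset (m : MonomialOrder (Fin s)) (I : Ideal (MvPolynomial (Fin s) K))
    (d : ℕ) : Set (MvPolynomial (Fin s) K) :=
  { f | f ≠ 0 ∧ (∀ a ∈ f.support, a.degree = d ∧ monomial a (1 : K) ∉ initIdeal K m I) ∧
      IsZeroDivOn K I f }

variable {s} in
/-- The footprint function `fp_I`. -/
noncomputable def fp (m : MonomialOrder (Fin s)) (I : Ideal (MvPolynomial (Fin s) K))
    (d : ℕ) : ℤ :=
  if (Mset K m I d).Nonempty then
    (degQ K s I : ℤ) -
      sSup ((fun a => (degQ K s (initIdeal K m I ⊔ Ideal.span {monomial a (1 : K)}) : ℤ)) ''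
        Mset K m I d)
  else (degQ K s I : ℤ)

variable {s} in
/-- The minimum distance function `δ_I`. -/
noncomputable def delta (m : MonomialOrder (Fin s)) (I : Ideal (MvPolynomial (Fin s) K))
    (d : ℕ) : ℤ :=
  if (Fset K m I d).Nonempty then
    (degQ K s I : ℤ) -
      sSup ((fun f => (degQ K s (I ⊔ Ideal.span {f}) : ℤ)) '' Fset K m I d)
  else (degQ K s I : ℤ)

variable {s} in
/-- The vanishing ideal of a set of points of projective space: the ideal generated by
the homogeneous polynomials vanishing at (representatives of) all points of `X`. -/
noncomputable def vanishingIdeal (X : Set (Projectivization K (Fin s → K))) :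
    Ideal (MvPolynomial (Fin s) K) :=
  Ideal.span { f | (∃ n, f.IsHomogeneous n) ∧ ∀ p ∈ X, eval p.rep f = 0 }

variable {s} in
/-- The set of zeros in `X` of a (homogeneous) polynomial `f`. -/
def VX (X : Set (Projectivization K (Fin s → K))) (f : MvPolynomial (Fin s) K) :
    Set (Projectivization K (Fin s → K)) :=
  { p ∈ X | eval p.rep f = 0 }


section Aux1

variable {K : Type*} [Field K] {s : ℕ} {m : MonomialOrder (Fin s)}

lemma lExp_mem_support {f : MvPolynomial (Fin s) K} (hf : f ≠ 0) :
    lExp K m f ∈ f.support := by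
  obtain ⟨b, hb, hsup⟩ := Finset.exists_mem_eq_sup f.support
    (MvPolynomial.support_nonempty.mpr hf) (fun a => m.toSyn a)
  rw [lExp, hsup, AddEquiv.symm_apply_apply]
  exact hb

lemma le_lExp {f : MvPolynomial (Fin s) K} {b : Fin s →₀ ℕ} (hb : b ∈ f.support) :
    m.toSyn b ≤ m.toSyn (lExp K m f) := by
  rw [lExp, AddEquiv.apply_symm_apply]
  exact Finset.le_sup hb

lemma coeff_lExp_ne_zero {f : MvPolynomial (Fin s) K} (hf : f ≠ 0) :
    MvPolynomial.coeff (lExp K m f) f ≠ 0 :=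
  MvPolynomial.mem_support_iff.mp (lExp_mem_support hf)

lemma lExp_mul {f g : MvPolynomial (Fin s) K} (hf : f ≠ 0) (hg : g ≠ 0) :
    lExp K m (f * g) = lExp K m f + lExp K m g := by
  classical
  have hcoeff : MvPolynomial.coeff (lExp K m f + lExp K m g) (f * g)
      = MvPolynomial.coeff (lExp K m f) f * MvPolynomial.coeff (lExp K m g) g := by
    rw [MvPolynomial.coeff_mul]
    apply Finset.sum_eq_single (lExp K m f, lExp K m g)
    · rintro ⟨u, v⟩ huv hne
      rw [Finset.HasAntidiagonal.mem_antidiagonal] at huv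
      by_cases hu : u ∈ f.support
      · by_cases hv : v ∈ g.support
        · exfalso
          have h1 : m.toSyn u ≤ m.toSyn (lExp K m f) := le_lExp hu
          have h2 : m.toSyn v ≤ m.toSyn (lExp K m g) := le_lExp hv
          have hsum : m.toSyn u + m.toSyn v = m.toSyn (lExp K m f) + m.toSyn (lExp K m g) := by
            rw [← map_add, ← map_add, huv]
          have hu' : m.toSyn u = m.toSyn (lExp K m f) := by
            by_contra hne'
            have hlt : m.toSyn u + m.toSyn v
                < m.toSyn (lExp K m f) + m.toSyn (lExp K m g) :=
              add_lt_add_of_lt_of_le (lt_of_le_of_ne h1 hne') h2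
            rw [hsum] at hlt
            exact lt_irrefl _ hlt
          have hv' : m.toSyn v = m.toSyn (lExp K m g) := by
            have := hsum
            rw [hu'] at this
            exact add_left_cancel this
          exact hne (Prod.ext (m.toSyn.injective hu') (m.toSyn.injective hv'))
        · rw [MvPolynomial.notMem_support_iff.mp hv, mul_zero]
      · rw [MvPolynomial.notMem_support_iff.mp hu, zero_mul]
    · intro hmem
      exfalso
      exact hmem (Finset.HasAntidiagonal.mem_antidiagonal.mpr rfl)
  have hne : MvPolynomial.coeff (lExp K m f + lExp K m g) (f * g) ≠ 0 := by
    rw [hcoeff]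
    exact mul_ne_zero (coeff_lExp_ne_zero hf) (coeff_lExp_ne_zero hg)
  have hmem : lExp K m f + lExp K m g ∈ (f * g).support := MvPolynomial.mem_support_iff.mpr hne
  have h1 : m.toSyn (lExp K m f + lExp K m g) ≤ m.toSyn (lExp K m (f * g)) := le_lExp hmem
  have h2 : m.toSyn (lExp K m (f * g)) ≤ m.toSyn (lExp K m f + lExp K m g) := by
    have hfg : f * g ≠ 0 := mul_ne_zero hf hg
    have hsup := lExp_mem_support (m := m) hfg
    have hsub := MvPolynomial.support_mul f g hsup
    obtain ⟨u, hu, v, hv, huv⟩ := Finset.mem_add.mp hsub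
    rw [← huv, map_add, map_add]
    exact add_le_add (le_lExp hu) (le_lExp hv)
  exact m.toSyn.injective (le_antisymm h2 h1)

end Aux1
section Aux2

open MvPolynomial

variable {K : Type*} [Field K] {s : ℕ} {m : MonomialOrder (Fin s)}

lemma mem_initIdeal_iff {I : Ideal (MvPolynomial (Fin s) K)} {p : MvPolynomial (Fin s) K} :
    p ∈ initIdeal K m I ↔
      ∀ b ∈ p.support, ∃ f ∈ I, f ≠ 0 ∧ lExp K m f ≤ b := by
  have hset : { g | ∃ f ∈ I, f ≠ 0 ∧ g = monomial (lExp K m f) (1 : K) }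
      = (fun e => monomial e (1 : K)) '' { e | ∃ f ∈ I, f ≠ 0 ∧ lExp K m f = e } := by
    ext g
    constructor
    · rintro ⟨f, hfI, hf0, rfl⟩
      exact ⟨lExp K m f, ⟨f, hfI, hf0, rfl⟩, rfl⟩
    · rintro ⟨e, ⟨f, hfI, hf0, rfl⟩, rfl⟩
      exact ⟨f, hfI, hf0, rfl⟩
  rw [initIdeal, hset, MvPolynomial.mem_ideal_span_monomial_image]
  constructor
  · intro h b hb
    obtain ⟨e, ⟨f, hfI, hf0, rfl⟩, hle⟩ := h b hb
    exact ⟨f, hfI, hf0, hle⟩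
  · intro h b hb
    obtain ⟨f, hfI, hf0, hle⟩ := h b hb
    exact ⟨lExp K m f, ⟨f, hfI, hf0, rfl⟩, hle⟩

lemma lExp_mem_initIdeal {I : Ideal (MvPolynomial (Fin s) K)} {f : MvPolynomial (Fin s) K}
    (hfI : f ∈ I) (hf0 : f ≠ 0) :
    monomial (lExp K m f) (1 : K) ∈ initIdeal K m I :=
  Ideal.subset_span ⟨f, hfI, hf0, rfl⟩

/-- Membership of a monomial in an ideal generated by the `X i ^ d i`. -/
lemma monomial_mem_span_pow_iff {d : Fin s → ℕ} {b : Fin s →₀ ℕ} :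
    monomial b (1 : K) ∈ Ideal.span
        { g | ∃ i : Fin s, (i : ℕ) ≠ 0 ∧ g = (X i : MvPolynomial (Fin s) K) ^ d i }
      ↔ ∃ i : Fin s, (i : ℕ) ≠ 0 ∧ d i ≤ b i := by
  have hset : { g | ∃ i : Fin s, (i : ℕ) ≠ 0 ∧ g = (X i : MvPolynomial (Fin s) K) ^ d i }
      = (fun e => monomial e (1 : K)) ''
          { e | ∃ i : Fin s, (i : ℕ) ≠ 0 ∧ e = Finsupp.single i (d i) } := by
    ext g
    constructor
    · rintro ⟨i, hi, rfl⟩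
      exact ⟨Finsupp.single i (d i), ⟨i, hi, rfl⟩, MvPolynomial.X_pow_eq_monomial.symm⟩
    · rintro ⟨e, ⟨i, hi, rfl⟩, rfl⟩
      exact ⟨i, hi, MvPolynomial.X_pow_eq_monomial.symm⟩
  rw [hset, MvPolynomial.mem_ideal_span_monomial_image]
  constructor
  · intro h
    obtain ⟨e, ⟨i, hi, rfl⟩, hle⟩ := h b (by
      rw [MvPolynomial.support_monomial, if_neg (one_ne_zero)]
      exact Finset.mem_singleton_self b)
    exact ⟨i, hi, Finsupp.single_le_iff.mp hle⟩
  · rintro ⟨i, hi, hle⟩ c hc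
    rw [MvPolynomial.support_monomial, if_neg (one_ne_zero), Finset.mem_singleton] at hc
    subst hc
    exact ⟨Finsupp.single i (d i), ⟨i, hi, rfl⟩, Finsupp.single_le_iff.mpr hle⟩

/-- Every element of the vanishing ideal vanishes at the representatives of all points. -/
lemma eval_rep_eq_zero {𝕏 : Set (Projectivization K (Fin s → K))}
    {f : MvPolynomial (Fin s) K} (hf : f ∈ vanishingIdeal K 𝕏)
    {p : Projectivization K (Fin s → K)} (hp : p ∈ 𝕏) :
    eval p.rep f = 0 := by
  refine Submodule.span_induction ?_ ?_ ?_ ?_ hf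
  · rintro x ⟨-, hx⟩
    exact hx p hp
  · simp
  · intro x y _ _ hx hy
    rw [map_add, hx, hy, add_zero]
  · intro c x _ hx
    rw [smul_eq_mul, map_mul, hx, mul_zero]

/-- The vanishing ideal is graded. -/
lemma homogeneousComponent_mem_vanishingIdeal {𝕏 : Set (Projectivization K (Fin s → K))}
    {f : MvPolynomial (Fin s) K} (hf : f ∈ vanishingIdeal K 𝕏) (n : ℕ) :
    homogeneousComponent n f ∈ vanishingIdeal K 𝕏 := by
  letI := MvPolynomial.gradedAlgebra (σ := Fin s) (R := K)
  have hhom : Ideal.IsHomogeneous (homogeneousSubmodule (Fin s) K) (vanishingIdeal K 𝕏) := by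
    apply Ideal.homogeneous_span
    rintro x ⟨⟨n, hn⟩, -⟩
    exact ⟨n, (mem_homogeneousSubmodule n x).mpr hn⟩
  have h2 := hhom n hf
  have e : ((DirectSum.decompose (homogeneousSubmodule (Fin s) K) f) n
      : MvPolynomial (Fin s) K) = homogeneousComponent n f :=
    MvPolynomial.decomposition.decompose'_apply f n
  rwa [e] at h2

end Aux2
section Aux3

open MvPolynomial
open scoped Pointwise

variable {K : Type*} [Field K] {s : ℕ} {m : MonomialOrder (Fin s)}

/-- Reduction to standard form: every polynomial is congruent mod `I` to one all of whose
monomials are standard (not in the initial ideal). -/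
lemma exists_std_reduction {I : Ideal (MvPolynomial (Fin s) K)}
    (hJ1 : (1 : MvPolynomial (Fin s) K) ∉ initIdeal K m I)
    (g : MvPolynomial (Fin s) K) :
    ∃ g', g - g' ∈ I ∧ ∀ b ∈ g'.support, monomial b (1 : K) ∉ initIdeal K m I := by
  classical
  set J := initIdeal K m I with hJdef
  suffices H : ∀ v : m.syn, ∀ g : MvPolynomial (Fin s) K,
      (g.support.filter (fun b => monomial b (1 : K) ∈ J)).sup m.toSyn = v →
      ∃ g', g - g' ∈ I ∧ ∀ b ∈ g'.support, monomial b (1 : K) ∉ J by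
    exact H _ g rfl
  intro v
  induction v using WellFoundedLT.induction with
  | _ v ih =>
  intro g hgv
  by_cases hne : (g.support.filter (fun b => monomial b (1 : K) ∈ J)).Nonempty
  · obtain ⟨b₀, hb₀mem, hb₀⟩ := Finset.exists_mem_eq_sup _ hne (fun a => m.toSyn a)
    have hb₀J : monomial b₀ (1 : K) ∈ J := (Finset.mem_filter.mp hb₀mem).2
    -- find a reducer
    obtain ⟨h, hhI, hh0, hle⟩ := mem_initIdeal_iff.mp hb₀J b₀ (by
      rw [MvPolynomial.support_monomial, if_neg one_ne_zero]
      exact Finset.mem_singleton_self b₀)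
    set e := lExp K m h with he
    set c : K := coeff b₀ g / coeff e h with hc
    set t : MvPolynomial (Fin s) K := monomial (b₀ - e) c * h with ht
    have htI : t ∈ I := Ideal.mul_mem_left _ _ hhI
    have hbe : (b₀ - e) + e = b₀ := tsub_add_cancel_of_le hle
    have hcm : coeff ((b₀ - e) + e) ((monomial (b₀ - e)) c * h) = c * coeff e h :=
      MvPolynomial.coeff_monomial_mul _ _ _ _
    rw [hbe] at hcm
    have hcoefft : coeff b₀ t = coeff b₀ g := by
      rw [ht, hcm, hc, div_mul_cancel₀ _ (coeff_lExp_ne_zero hh0)]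
    set g₁ := g - t with hg₁
    have hb₀not : b₀ ∉ g₁.support := by
      rw [MvPolynomial.notMem_support_iff, hg₁, MvPolynomial.coeff_sub, hcoefft, sub_self]
    have hb₀ne0 : b₀ ≠ 0 := by
      intro h0
      apply hJ1
      rw [← MvPolynomial.C_1, ← MvPolynomial.monomial_zero', ← h0]
      exact hb₀J
    have hlt : ∀ b ∈ g₁.support, monomial b (1 : K) ∈ J → m.toSyn b < m.toSyn b₀ := by
      intro b hb hbJ
      have hbsub : b ∈ g.support ∪ t.support := by
        have := MvPolynomial.support_sub (Fin s) g t hb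
        exact this
      have hbne : b ≠ b₀ := fun h => hb₀not (h ▸ hb)
      have hble : m.toSyn b ≤ m.toSyn b₀ := by
        rcases Finset.mem_union.mp hbsub with hbg | hbt
        · have : b ∈ g.support.filter (fun b => monomial b (1 : K) ∈ J) :=
            Finset.mem_filter.mpr ⟨hbg, hbJ⟩
          have := Finset.le_sup (f := fun a => m.toSyn a) this
          rwa [hb₀] at this
        · have hsub2 : t.support ⊆ (monomial (b₀ - e) c).support + h.support :=
            MvPolynomial.support_mul _ _
          obtain ⟨u, hu, b', hb', hub⟩ := Finset.mem_add.mp (hsub2 hbt)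
          have hu' : u = b₀ - e := by
            have := MvPolynomial.support_monomial_subset hu
            exact Finset.mem_singleton.mp this
          subst hu'
          calc m.toSyn b = m.toSyn (b₀ - e) + m.toSyn b' := by rw [← hub, map_add]
            _ ≤ m.toSyn (b₀ - e) + m.toSyn e := add_le_add le_rfl (le_lExp (m := m) hb')
            _ = m.toSyn b₀ := by rw [← map_add, hbe]
      exact lt_of_le_of_ne hble (fun hh => hbne (m.toSyn.injective hh))
    subst hgv
    have hmu : (g₁.support.filter (fun b => monomial b (1 : K) ∈ J)).sup m.toSyn <
        (g.support.filter (fun b => monomial b (1 : K) ∈ J)).sup m.toSyn := by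
      rw [hb₀]
      have hne0 : m.toSyn b₀ ≠ 0 := fun hh => hb₀ne0 (by
        have := congrArg m.toSyn.symm hh
        rwa [AddEquiv.symm_apply_apply, map_zero] at this)
      have hbot : (⊥ : m.syn) < m.toSyn b₀ :=
        lt_of_le_of_ne bot_le (by simpa using Ne.symm hne0)
      rw [Finset.sup_lt_iff hbot]
      intro b hb
      have hb' := Finset.mem_filter.mp hb
      exact hlt b hb'.1 hb'.2
    obtain ⟨g', hg'I, hg'std⟩ := ih _ hmu g₁ rfl
    refine ⟨g', ?_, hg'std⟩
    have : g - g' = t + (g₁ - g') := by ring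
    rw [this]
    exact I.add_mem htI hg'I
  · refine ⟨g, by simp [Ideal.zero_mem], ?_⟩
    intro b hb hbJ
    exact Finset.eq_empty_iff_forall_notMem.mp
      (Finset.not_nonempty_iff_eq_empty.mp hne) b (Finset.mem_filter.mpr ⟨hb, hbJ⟩)

end Aux3
section Aux4

open MvPolynomial

variable {K : Type*} [Field K] {s : ℕ}

/-- The linear polynomial attached to a dual functional. -/
noncomputable def linPoly (φ : Module.Dual K (Fin s → K)) : MvPolynomial (Fin s) K :=
  ∑ i : Fin s, MvPolynomial.C (φ (Pi.single i 1)) * MvPolynomial.X i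

lemma linPoly_isHomogeneous (φ : Module.Dual K (Fin s → K)) :
    (linPoly φ).IsHomogeneous 1 :=
  MvPolynomial.IsHomogeneous.sum _ _ _ (fun i _ => MvPolynomial.isHomogeneous_C_mul_X _ _)

lemma eval_linPoly (φ : Module.Dual K (Fin s → K)) (v : Fin s → K) :
    eval v (linPoly φ) = φ v := by
  rw [linPoly, map_sum]
  have hv : v = ∑ i : Fin s, Pi.single i (v i) := (Finset.univ_sum_single v).symm
  conv_rhs => rw [hv]
  rw [map_sum]
  apply Finset.sum_congr rfl
  intro i _
  rw [eval_mul, eval_C, eval_X]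
  have hps : (Pi.single i (v i) : Fin s → K) = (v i) • (Pi.single i (1 : K) : Fin s → K) := by
    funext j
    simp [Pi.single_apply, mul_ite]
  rw [hps, map_smul, smul_eq_mul, mul_comm]

lemma exists_linear_eval_ne (p : Projectivization K (Fin s → K)) :
    ∃ L : MvPolynomial (Fin s) K, L.IsHomogeneous 1 ∧ eval p.rep L ≠ 0 := by
  have hrep : p.rep ≠ 0 := p.rep_nonzero
  have : ¬ ∀ φ : Module.Dual K (Fin s → K), φ p.rep = 0 := by
    rw [Module.forall_dual_apply_eq_zero_iff]
    exact hrep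
  push_neg at this
  obtain ⟨φ, hφ⟩ := this
  exact ⟨linPoly φ, linPoly_isHomogeneous φ, by rwa [eval_linPoly]⟩

lemma exists_linear_sep {p q : Projectivization K (Fin s → K)} (hpq : q ≠ p) :
    ∃ L : MvPolynomial (Fin s) K, L.IsHomogeneous 1 ∧
      eval q.rep L = 0 ∧ eval p.rep L ≠ 0 := by
  set u := p.rep with hu
  set w := q.rep with hw
  have hunz : u ≠ 0 := p.rep_nonzero
  have hwnz : w ≠ 0 := q.rep_nonzero
  have hus : u ∉ (K ∙ w) := by
    intro hmem
    obtain ⟨c, hc⟩ := Submodule.mem_span_singleton.mp hmem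
    have hc0 : c ≠ 0 := by
      rintro rfl
      rw [zero_smul] at hc
      exact hunz hc.symm
    apply hpq
    have h1 : Projectivization.mk K u hunz = Projectivization.mk K w hwnz := by
      rw [Projectivization.mk_eq_mk_iff]
      exact ⟨Units.mk0 c hc0, hc⟩
    calc q = Projectivization.mk K w hwnz := (Projectivization.mk_rep q).symm
      _ = Projectivization.mk K u hunz := h1.symm
      _ = p := Projectivization.mk_rep p
  set M := (Fin s → K) ⧸ (K ∙ w) with hM
  have hπu : Submodule.mkQ (K ∙ w) u ≠ 0 := by
    intro h0
    rw [Submodule.mkQ_apply, Submodule.Quotient.mk_eq_zero] at h0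
    exact hus h0
  have : ¬ ∀ φ : Module.Dual K M, φ (Submodule.mkQ (K ∙ w) u) = 0 := by
    rw [Module.forall_dual_apply_eq_zero_iff]
    exact hπu
  push_neg at this
  obtain ⟨φ, hφ⟩ := this
  set ψ : Module.Dual K (Fin s → K) := φ.comp (Submodule.mkQ (K ∙ w)) with hψ
  refine ⟨linPoly ψ, linPoly_isHomogeneous ψ, ?_, ?_⟩
  · rw [eval_linPoly]
    show φ (Submodule.mkQ (K ∙ w) w) = 0
    rw [Submodule.mkQ_apply, (Submodule.Quotient.mk_eq_zero _).mpr
      (Submodule.mem_span_singleton_self w), map_zero]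
  · rw [eval_linPoly]
    exact hφ

/-- The evaluation linear map at the representatives of a set of points. -/
noncomputable def evalMap (Y : Set (Projectivization K (Fin s → K))) :
    MvPolynomial (Fin s) K →ₗ[K] (Y → K) where
  toFun g := fun q => eval (q : Projectivization K (Fin s → K)).rep g
  map_add' x y := by funext q; simp
  map_smul' c x := by
    funext q
    simp [MvPolynomial.smul_eq_C_mul]

lemma evalMap_apply (Y : Set (Projectivization K (Fin s → K))) (g : MvPolynomial (Fin s) K)
    (q : Y) : evalMap Y g q = eval (q : Projectivization K (Fin s → K)).rep g := rfl

/-- Separator polynomials. -/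
lemma exists_separator {𝕏 : Set (Projectivization K (Fin s → K))} (hfin : 𝕏.Finite)
    {p : Projectivization K (Fin s → K)} (hp : p ∈ 𝕏) {D : ℕ}
    (hD : hfin.toFinset.card - 1 ≤ D) :
    ∃ F : MvPolynomial (Fin s) K, F.IsHomogeneous D ∧ eval p.rep F ≠ 0 ∧
      ∀ q ∈ 𝕏, q ≠ p → eval q.rep F = 0 := by
  classical
  set Y := hfin.toFinset.erase p with hY
  have hsep : ∀ q ∈ Y, ∃ L : MvPolynomial (Fin s) K, L.IsHomogeneous 1 ∧
      eval q.rep L = 0 ∧ eval p.rep L ≠ 0 := by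
    intro q hq
    exact exists_linear_sep (Finset.mem_erase.mp hq).1
  choose L hL1 hL2 hL3 using hsep
  obtain ⟨L₀, hL₀hom, hL₀ne⟩ := exists_linear_eval_ne p
  set F : MvPolynomial (Fin s) K :=
    (∏ q ∈ Y.attach, L q q.2) * L₀ ^ (D - Y.card) with hF
  have hYcard : Y.card ≤ D := by
    rw [hY, Finset.card_erase_of_mem (hfin.mem_toFinset.mpr hp)]
    exact hD
  refine ⟨F, ?_, ?_, ?_⟩
  · have h1 : (∏ q ∈ Y.attach, L q q.2).IsHomogeneous Y.card := by
      have := MvPolynomial.IsHomogeneous.prod Y.attach (fun q => L q q.2) (fun _ => 1)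
        (fun q _ => hL1 q q.2)
      simpa using this
    have h2 : (L₀ ^ (D - Y.card)).IsHomogeneous (D - Y.card) := by
      have := hL₀hom.pow (D - Y.card)
      simpa using this
    have := h1.mul h2
    rwa [Nat.add_sub_cancel' hYcard] at this
  · rw [hF, map_mul, map_pow, map_prod]
    apply mul_ne_zero
    · rw [Finset.prod_ne_zero_iff]
      intro q _
      exact hL3 q q.2
    · exact pow_ne_zero _ hL₀ne
  · intro q hq hqp
    have hqY : q ∈ Y := Finset.mem_erase.mpr ⟨hqp, hfin.mem_toFinset.mpr hq⟩
    rw [hF, map_mul, map_prod]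
    rw [Finset.prod_eq_zero (Finset.mem_attach Y ⟨q, hqY⟩) (hL2 q hqY), zero_mul]

end Aux4
section Aux5

open MvPolynomial

variable {K : Type*} [Field K] {s : ℕ}

lemma isHomogeneous_iff_support {f : MvPolynomial (Fin s) K} {n : ℕ} :
    f.IsHomogeneous n ↔ ∀ a ∈ f.support, Finsupp.degree a = n := by
  constructor
  · intro h a ha
    have := h (MvPolynomial.mem_support_iff.mp ha)
    rw [Finsupp.degree_eq_weight_one]
    exact this
  · intro h d hd
    rw [show (1 : Fin s → ℕ) = fun _ => 1 from rfl, ← Finsupp.degree_eq_weight_one]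
    exact h d (MvPolynomial.mem_support_iff.mpr hd)

lemma Finsupp.degree_eq_sum_univ {n : ℕ} (b : Fin n →₀ ℕ) :
    Finsupp.degree b = ∑ i : Fin n, b i := by
  rw [Finsupp.degree]
  apply Finset.sum_subset (Finset.subset_univ _)
  intro i _ hi
  exact Finsupp.notMem_support_iff.mp hi

end Aux5
section Aux6

open MvPolynomial Module

variable {K : Type*} [Field K] {s : ℕ}

lemma ncard_le_prod (hs : 0 < s)
    {𝕏 : Set (Projectivization K (Fin s → K))} (hfin : 𝕏.Finite)
    {m : MonomialOrder (Fin s)} {d : Fin s → ℕ}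
    (hinit : initIdeal K m (vanishingIdeal K 𝕏) = Ideal.span
      { g | ∃ i : Fin s, (i : ℕ) ≠ 0 ∧ g = (X i : MvPolynomial (Fin s) K) ^ d i })
    (hd : ∀ i : Fin s, (i : ℕ) ≠ 0 → 1 ≤ d i) :
    𝕏.ncard ≤ ∏ i ∈ Finset.univ.filter (fun i : Fin s => (i : ℕ) ≠ 0), d i := by
  classical
  have monJ : ∀ b : Fin s →₀ ℕ,
      monomial b (1 : K) ∈ initIdeal K m (vanishingIdeal K 𝕏)
        ↔ ∃ i : Fin s, (i : ℕ) ≠ 0 ∧ d i ≤ b i := by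
    intro b
    rw [hinit]
    exact monomial_mem_span_pow_iff
  set I := vanishingIdeal K 𝕏 with hI
  set J := initIdeal K m I with hJ
  have hJ1 : (1 : MvPolynomial (Fin s) K) ∉ J := by
    intro h1
    rw [← MvPolynomial.C_1, ← MvPolynomial.monomial_zero'] at h1
    obtain ⟨i, hi, hle⟩ := (monJ 0).mp h1
    simp only [Finsupp.coe_zero, Pi.zero_apply, Nat.le_zero] at hle
    have := hd i hi
    omega
  haveI : Fintype ↥𝕏 := hfin.fintype
  set N : ℕ := hfin.toFinset.card with hN
  set D : ℕ := N + 1 with hD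
  set Bfin : Finset (Fin s →₀ ℕ) :=
    ((Fintype.piFinset (fun _ : Fin s => Finset.range (D + 1))).image
      (fun v => Finsupp.equivFunOnFinite.symm v)).filter
      (fun b => Finsupp.degree b = D ∧ ∀ i : Fin s, (i : ℕ) ≠ 0 → b i < d i) with hB
  have hBmem : ∀ b : Fin s →₀ ℕ, Finsupp.degree b = D →
      (∀ i : Fin s, (i : ℕ) ≠ 0 → b i < d i) → b ∈ Bfin := by
    intro b hdeg hstd
    rw [hB, Finset.mem_filter]
    refine ⟨Finset.mem_image.mpr ⟨⇑b, ?_, ?_⟩, hdeg, hstd⟩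
    · rw [Fintype.mem_piFinset]
      intro i
      rw [Finset.mem_range]
      have : b i ≤ Finsupp.degree b := Finsupp.le_degree i b
      omega
    · exact Finsupp.equivFunOnFinite_symm_coe b
  have hBcard : Bfin.card ≤ ∏ i ∈ Finset.univ.filter (fun i : Fin s => (i : ℕ) ≠ 0), d i := by
    have hinj : ∀ b ∈ Bfin, ∀ b' ∈ Bfin,
        (fun i : Fin s => if (i : ℕ) = 0 then 0 else b i)
          = (fun i : Fin s => if (i : ℕ) = 0 then 0 else b' i) → b = b' := by
      intro b hb b' hb' heq
      have hb2 := (Finset.mem_filter.mp hb).2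
      have hb'2 := (Finset.mem_filter.mp hb').2
      have hne : ∀ i : Fin s, (i : ℕ) ≠ 0 → b i = b' i := by
        intro i hi
        have := congrFun heq i
        rwa [if_neg hi, if_neg hi] at this
      set i₀ : Fin s := ⟨0, hs⟩ with hi₀
      have hval : ∀ j : Fin s, j ≠ i₀ → (j : ℕ) ≠ 0 := by
        intro j hj hj0
        exact hj (Fin.ext hj0)
      have hsum : ∀ c : Fin s →₀ ℕ, Finsupp.degree c = D →
          c i₀ + ∑ j ∈ Finset.univ.erase i₀, c j = D := by
        intro c hc
        rw [Finset.add_sum_erase _ _ (Finset.mem_univ i₀), ← Finsupp.degree_eq_sum_univ, hc]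
      have hs1 := hsum b hb2.1
      have hs2 := hsum b' hb'2.1
      have hsame : ∑ j ∈ Finset.univ.erase i₀, b j = ∑ j ∈ Finset.univ.erase i₀, b' j := by
        apply Finset.sum_congr rfl
        intro j hj
        exact hne j (hval j (Finset.mem_erase.mp hj).1)
      have hb0 : b i₀ = b' i₀ := by omega
      apply Finsupp.ext
      intro i
      by_cases hi : (i : ℕ) = 0
      · have : i = i₀ := Fin.ext hi
        rw [this, hb0]
      · exact hne i hi
    have hmaps : ∀ b ∈ Bfin, (fun i : Fin s => if (i : ℕ) = 0 then 0 else b i)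
        ∈ Fintype.piFinset (fun i : Fin s => Finset.range (if (i : ℕ) = 0 then 1 else d i)) := by
      intro b hb
      rw [Fintype.mem_piFinset]
      intro i
      rw [Finset.mem_range]
      by_cases hi : (i : ℕ) = 0
      · rw [if_pos hi, if_pos hi]; omega
      · rw [if_neg hi, if_neg hi]
        exact (Finset.mem_filter.mp hb).2.2 i hi
    have hcard := Finset.card_le_card_of_injOn _ hmaps hinj
    refine hcard.trans ?_
    rw [Fintype.card_piFinset]
    have : ∀ i : Fin s, (Finset.range (if (i : ℕ) = 0 then 1 else d i)).card
        = if (i : ℕ) = 0 then 1 else d i := fun i => Finset.card_range _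
    rw [Finset.prod_congr rfl (fun i _ => this i), Finset.prod_ite, Finset.prod_const_one,
      one_mul]
  set T : Finset (MvPolynomial (Fin s) K) := Bfin.image (fun b => monomial b (1 : K)) with hT
  have hspan : Submodule.span K (⇑(evalMap 𝕏) '' ↑T) = ⊤ := by
    rw [eq_top_iff]
    rintro y -
    have hy : y = ∑ p : ↥𝕏, y p • (Pi.single p (1 : K) : ↥𝕏 → K) := by
      funext q
      rw [Finset.sum_apply]
      simp [Pi.single_apply]
    rw [hy]
    apply Submodule.sum_mem
    intro p _
    apply Submodule.smul_mem
    -- separator for p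
    obtain ⟨F, hFhom, hFp, hFq⟩ := exists_separator hfin p.2 (D := D) (by omega)
    obtain ⟨F', hF'I, hF'std⟩ := exists_std_reduction (m := m) (I := I) hJ1 F
    set F'' := homogeneousComponent D F' with hF''
    have hFF'' : F - F'' ∈ I := by
      have h1 : homogeneousComponent D (F - F') ∈ I :=
        homogeneousComponent_mem_vanishingIdeal hF'I D
      have h2 : homogeneousComponent D F = F := by
        rw [homogeneousComponent_of_mem ((mem_homogeneousSubmodule D F).mpr hFhom), if_pos rfl]
      rwa [map_sub, h2] at h1
    have hevF : evalMap 𝕏 F = evalMap 𝕏 F'' := by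
      have hz : evalMap 𝕏 (F - F'') = 0 := by
        funext q
        rw [evalMap_apply]
        exact eval_rep_eq_zero hFF'' q.2
      rw [map_sub] at hz
      exact sub_eq_zero.mp hz
    have hsingleF : (Pi.single p (1 : K) : ↥𝕏 → K)
        = (eval (p : Projectivization K (Fin s → K)).rep F)⁻¹ • evalMap 𝕏 F := by
      funext q
      rw [Pi.smul_apply, evalMap_apply]
      by_cases hqp : q = p
      · subst hqp
        rw [Pi.single_eq_same, smul_eq_mul, inv_mul_cancel₀ hFp]
      · rw [Pi.single_eq_of_ne hqp, smul_eq_mul,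
          hFq q q.2 (fun h => hqp (Subtype.ext h)), mul_zero]
    rw [hsingleF, hevF]
    apply Submodule.smul_mem
    -- F'' is a combination of standard monomials of degree D
    have hsupp : ∀ b ∈ F''.support, b ∈ Bfin := by
      intro b hb
      have hbF' : b ∈ F'.support := by
        rw [MvPolynomial.mem_support_iff] at hb ⊢
        intro h0
        apply hb
        rw [hF'', coeff_homogeneousComponent]
        rw [h0]
        simp
      apply hBmem
      · exact isHomogeneous_iff_support.mp (homogeneousComponent_isHomogeneous D F') b hb
      · intro i hi
        have := hF'std b hbF'
        rw [monJ] at this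
        push_neg at this
        exact this i hi
    have hF''eq : F'' = ∑ b ∈ F''.support, coeff b F'' • monomial b (1 : K) := by
      conv_lhs => rw [MvPolynomial.as_sum F'']
      apply Finset.sum_congr rfl
      intro b _
      rw [MvPolynomial.smul_monomial, smul_eq_mul, mul_one]
    rw [hF''eq, map_sum]
    apply Submodule.sum_mem
    intro b hb
    rw [map_smul]
    apply Submodule.smul_mem
    apply Submodule.subset_span
    exact ⟨monomial b (1 : K), Finset.mem_coe.mpr (Finset.mem_image.mpr ⟨b, hsupp b hb, rfl⟩), rfl⟩
  have h1 : 𝕏.ncard = Fintype.card ↥𝕏 := by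
    rw [← Nat.card_coe_set_eq, Nat.card_eq_fintype_card]
  have h2 : Fintype.card ↥𝕏 = Module.finrank K (↥𝕏 → K) := (Module.finrank_pi K).symm
  have h3 : Module.finrank K (↥𝕏 → K)
      = Module.finrank K (Submodule.span K (⇑(evalMap 𝕏) '' ↑T)) := by
    rw [hspan, finrank_top]
  have h4 : (⇑(evalMap 𝕏) '' ↑T : Set (↥𝕏 → K)) = ↑(T.image (evalMap 𝕏)) := by
    simp [Finset.coe_image]
  have h5 : Module.finrank K (Submodule.span K (⇑(evalMap 𝕏) '' ↑T))
      ≤ (T.image (evalMap 𝕏)).card := by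
    rw [h4]
    exact finrank_span_finset_le_card _
  calc 𝕏.ncard = Module.finrank K (Submodule.span K (⇑(evalMap 𝕏) '' ↑T)) := by
        rw [h1, h2, h3]
    _ ≤ (T.image (evalMap 𝕏)).card := h5
    _ ≤ T.card := Finset.card_image_le
    _ ≤ Bfin.card := Finset.card_image_le
    _ ≤ _ := hBcard

end Aux6
section Aux7

open MvPolynomial Module

variable {K : Type*} [Field K] {s : ℕ}

lemma prod_le_ncard_nonzeros (hs : 0 < s)
    {𝕏 : Set (Projectivization K (Fin s → K))} (hfin : 𝕏.Finite)
    {m : MonomialOrder (Fin s)} {d : Fin s → ℕ}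
    (hinit : initIdeal K m (vanishingIdeal K 𝕏) = Ideal.span
      { g | ∃ i : Fin s, (i : ℕ) ≠ 0 ∧ g = (X i : MvPolynomial (Fin s) K) ^ d i })
    {dd : ℕ} {f : MvPolynomial (Fin s) K}
    (hf : f ∈ Fset K m (vanishingIdeal K 𝕏) dd) :
    ∏ i ∈ Finset.univ.filter (fun i : Fin s => (i : ℕ) ≠ 0), (d i - lExp K m f i)
      ≤ (𝕏 \ VX K 𝕏 f).ncard := by
  classical
  obtain ⟨hf0, hfstd, -⟩ := hf
  have monJ : ∀ b : Fin s →₀ ℕ,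
      monomial b (1 : K) ∈ initIdeal K m (vanishingIdeal K 𝕏)
        ↔ ∃ i : Fin s, (i : ℕ) ≠ 0 ∧ d i ≤ b i := by
    intro b
    rw [hinit]
    exact monomial_mem_span_pow_iff
  set a := lExp K m f with ha
  have hamem : a ∈ f.support := lExp_mem_support hf0
  have astd : ∀ i : Fin s, (i : ℕ) ≠ 0 → a i < d i := by
    intro i hi
    have := (hfstd a hamem).2
    rw [monJ] at this
    push_neg at this
    exact this i hi
  set i₀ : Fin s := ⟨0, hs⟩ with hi₀
  have hfe : Finset.univ.filter (fun j : Fin s => (j : ℕ) ≠ 0) = Finset.univ.erase i₀ := by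
    ext j
    simp only [Finset.mem_filter, Finset.mem_univ, true_and, Finset.mem_erase, and_true]
    constructor
    · intro hj hj'
      exact hj (by rw [hj'])
    · intro hj hj'
      exact hj (Fin.ext hj')
  set D : ℕ := ∑ i : Fin s, d i with hD
  set W : Set (Projectivization K (Fin s → K)) := 𝕏 \ VX K 𝕏 f with hW
  haveI : Fintype ↥W := (hfin.subset Set.diff_subset).fintype
  -- index type
  set nn : Fin s → ℕ := fun i => if (i : ℕ) = 0 then 1 else d i - a i with hnn
  have hSle : ∀ c : (i : Fin s) → Fin (nn i),
      ∑ j ∈ Finset.univ.filter (fun j : Fin s => (j : ℕ) ≠ 0), (c j : ℕ) ≤ D := by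
    intro c
    have h1 : ∀ j ∈ Finset.univ.filter (fun j : Fin s => (j : ℕ) ≠ 0), (c j : ℕ) ≤ d j := by
      intro j hj
      have hj' := (Finset.mem_filter.mp hj).2
      have hlt : (c j : ℕ) < if (j : ℕ) = 0 then 1 else d j - a j := (c j).isLt
      rw [if_neg hj'] at hlt
      omega
    calc ∑ j ∈ Finset.univ.filter (fun j : Fin s => (j : ℕ) ≠ 0), (c j : ℕ)
        ≤ ∑ j ∈ Finset.univ.filter (fun j : Fin s => (j : ℕ) ≠ 0), d j :=
          Finset.sum_le_sum h1
      _ ≤ ∑ j : Fin s, d j := Finset.sum_le_sum_of_subset (Finset.filter_subset _ _)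
  set eF : ((i : Fin s) → Fin (nn i)) → (Fin s →₀ ℕ) := fun c =>
    Finsupp.equivFunOnFinite.symm (fun i => if (i : ℕ) = 0 then
      D - ∑ j ∈ Finset.univ.filter (fun j : Fin s => (j : ℕ) ≠ 0), (c j : ℕ)
      else (c i : ℕ)) with heF
  have heapp : ∀ c, ∀ i : Fin s, eF c i = if (i : ℕ) = 0 then
      D - ∑ j ∈ Finset.univ.filter (fun j : Fin s => (j : ℕ) ≠ 0), (c j : ℕ)
      else (c i : ℕ) := by
    intro c i
    rw [heF]
    rfl
  have hdeg : ∀ c, Finsupp.degree (eF c) = D := by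
    intro c
    rw [Finsupp.degree_eq_sum_univ]
    rw [← Finset.add_sum_erase _ _ (Finset.mem_univ i₀)]
    have h1 : eF c i₀ = D - ∑ j ∈ Finset.univ.filter (fun j : Fin s => (j : ℕ) ≠ 0), (c j : ℕ) := by
      rw [heapp]
      simp [hi₀]
    have h2 : ∑ j ∈ Finset.univ.erase i₀, eF c j
        = ∑ j ∈ Finset.univ.filter (fun j : Fin s => (j : ℕ) ≠ 0), (c j : ℕ) := by
      rw [← hfe]
      apply Finset.sum_congr rfl
      intro j hj
      rw [heapp, if_neg (Finset.mem_filter.mp hj).2]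
    rw [h1, h2, Nat.sub_add_cancel (hSle c)]
  have heinj : Function.Injective eF := by
    intro c c' hcc
    funext i
    by_cases hi : (i : ℕ) = 0
    · have h1 : (c i : ℕ) < if (i : ℕ) = 0 then 1 else d i - a i := (c i).isLt
      have h2 : (c' i : ℕ) < if (i : ℕ) = 0 then 1 else d i - a i := (c' i).isLt
      rw [if_pos hi] at h1 h2
      exact Fin.ext (by omega)
    · have := congrArg (fun b : Fin s →₀ ℕ => b i) hcc
      rw [heapp, heapp, if_neg hi, if_neg hi] at this
      exact Fin.ext this
  -- linear independence
  set v : ((i : Fin s) → Fin (nn i)) → (↥W → K) :=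
    fun c => evalMap W (monomial (eF c) (1 : K)) with hv
  have hli : LinearIndependent K v := by
    rw [Fintype.linearIndependent_iff]
    intro g hg
    set h : MvPolynomial (Fin s) K := ∑ c : (i : Fin s) → Fin (nn i), monomial (eF c) (g c)
      with hh
    have hcoeffh : ∀ b : Fin s →₀ ℕ, coeff b h
        = ∑ c : (i : Fin s) → Fin (nn i), if eF c = b then g c else 0 := by
      intro b
      rw [hh, MvPolynomial.coeff_sum]
      apply Finset.sum_congr rfl
      intro c _
      rw [MvPolynomial.coeff_monomial]
    have hcoeffe : ∀ c₀, coeff (eF c₀) h = g c₀ := by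
      intro c₀
      rw [hcoeffh]
      rw [Finset.sum_eq_single c₀]
      · rw [if_pos rfl]
      · intro c _ hne
        rw [if_neg (fun hc => hne (heinj hc))]
      · intro habs
        exact absurd (Finset.mem_univ c₀) habs
    have hvh : evalMap W h = 0 := by
      rw [hh, map_sum]
      rw [← hg]
      apply Finset.sum_congr rfl
      intro c _
      rw [hv]
      have : monomial (eF c) (g c) = g c • monomial (eF c) (1 : K) := by
        rw [MvPolynomial.smul_monomial, smul_eq_mul, mul_one]
      rw [this, map_smul]
    have hh0 : h = 0 := by
      by_contra hne
      have hfdd : f.IsHomogeneous dd :=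
        isHomogeneous_iff_support.mpr (fun b hb => (hfstd b hb).1)
      have hhhom : h.IsHomogeneous D := by
        rw [hh]
        exact MvPolynomial.IsHomogeneous.sum _ _ _
          (fun c _ => MvPolynomial.isHomogeneous_monomial _ (hdeg c))
      have hvanish : ∀ p ∈ 𝕏, eval p.rep (f * h) = 0 := by
        intro p hp
        rw [eval_mul]
        by_cases hpV : p ∈ VX K 𝕏 f
        · rw [hpV.2, zero_mul]
        · have hpW : p ∈ W := ⟨hp, hpV⟩
          have h0 : eval p.rep h = 0 := by
            simpa [evalMap_apply] using congrFun hvh ⟨p, hpW⟩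
          rw [h0, mul_zero]
      have hmem : f * h ∈ vanishingIdeal K 𝕏 :=
        Ideal.subset_span ⟨⟨dd + D, hfdd.mul hhhom⟩, hvanish⟩
      have hfh0 : f * h ≠ 0 := mul_ne_zero hf0 hne
      have hlm := lExp_mem_initIdeal (m := m) hmem hfh0
      rw [lExp_mul hf0 hne, monJ] at hlm
      obtain ⟨i, hi, hile⟩ := hlm
      -- lExp h is one of the eF c
      obtain ⟨c, hc⟩ : ∃ c, eF c = lExp K m h := by
        by_contra hnc
        push_neg at hnc
        have := coeff_lExp_ne_zero (m := m) hne
        rw [hcoeffh] at this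
        apply this
        apply Finset.sum_eq_zero
        intro c _
        rw [if_neg (hnc c)]
      have hci : (c i : ℕ) < d i - a i := by
        have hlt : (c i : ℕ) < if (i : ℕ) = 0 then 1 else d i - a i := (c i).isLt
        rwa [if_neg hi] at hlt
      have hei : lExp K m h i = (c i : ℕ) := by
        rw [← hc, heapp, if_neg hi]
      have hai := astd i hi
      rw [Finsupp.add_apply, ← ha, hei] at hile
      omega
    intro c₀
    rw [← hcoeffe c₀, hh0]
    rfl
  -- conclude
  haveI : Module.Finite K (↥W → K) := by infer_instance
  have hcard := hli.fintype_card_le_finrank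
  have h1 : Fintype.card ((i : Fin s) → Fin (nn i)) = ∏ i : Fin s, nn i := by
    rw [Fintype.card_pi]
    apply Finset.prod_congr rfl
    intro i _
    rw [Fintype.card_fin]
  have h2 : ∏ i : Fin s, nn i
      = ∏ i ∈ Finset.univ.filter (fun i : Fin s => (i : ℕ) ≠ 0), (d i - a i) := by
    rw [hnn]
    rw [Finset.prod_ite, Finset.prod_const_one, one_mul]
  have h3 : Module.finrank K (↥W → K) = W.ncard := by
    rw [Module.finrank_pi K, ← Nat.card_eq_fintype_card, Nat.card_coe_set_eq]
  rw [h1, h2, h3] at hcard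
  exact hcard

end Aux7
section Aux8

open MvPolynomial

variable {K : Type*} [Field K] {s : ℕ}

lemma exists_pos_lExp
    {𝕏 : Set (Projectivization K (Fin s → K))}
    {m : MonomialOrder (Fin s)} {d : Fin s → ℕ}
    (hinit : initIdeal K m (vanishingIdeal K 𝕏) = Ideal.span
      { g | ∃ i : Fin s, (i : ℕ) ≠ 0 ∧ g = (X i : MvPolynomial (Fin s) K) ^ d i })
    {dd : ℕ} {f : MvPolynomial (Fin s) K}
    (hf : f ∈ Fset K m (vanishingIdeal K 𝕏) dd) :
    ∃ i : Fin s, (i : ℕ) ≠ 0 ∧ 1 ≤ lExp K m f i := by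
  classical
  obtain ⟨hf0, hfstd, g, hgI, hfgI⟩ := hf
  have monJ : ∀ b : Fin s →₀ ℕ,
      monomial b (1 : K) ∈ initIdeal K m (vanishingIdeal K 𝕏)
        ↔ ∃ i : Fin s, (i : ℕ) ≠ 0 ∧ d i ≤ b i := by
    intro b
    rw [hinit]
    exact monomial_mem_span_pow_iff
  have hJ1 : (1 : MvPolynomial (Fin s) K) ∉ initIdeal K m (vanishingIdeal K 𝕏) := by
    intro h1
    obtain ⟨b, hb⟩ := MvPolynomial.support_nonempty.mpr hf0
    have hbJ := (hfstd b hb).2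
    apply hbJ
    have : initIdeal K m (vanishingIdeal K 𝕏) = ⊤ := (Ideal.eq_top_iff_one _).mpr h1
    rw [this]
    exact Submodule.mem_top
  obtain ⟨g', hgg'I, hg'std⟩ := exists_std_reduction (m := m) hJ1 g
  have hg'0 : g' ≠ 0 := by
    rintro rfl
    apply hgI
    have : g = g - 0 := by ring
    rwa [this]
  have hfg'I : f * g' ∈ vanishingIdeal K 𝕏 := by
    have : f * g' = f * g - f * (g - g') := by ring
    rw [this]
    exact Submodule.sub_mem _ hfgI (Ideal.mul_mem_left _ _ hgg'I)
  have hfg'0 : f * g' ≠ 0 := mul_ne_zero hf0 hg'0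
  have hlm := lExp_mem_initIdeal (m := m) hfg'I hfg'0
  rw [lExp_mul hf0 hg'0, monJ] at hlm
  obtain ⟨i, hi, hile⟩ := hlm
  have hstd' : lExp K m g' i < d i := by
    have := hg'std (lExp K m g') (lExp_mem_support hg'0)
    rw [monJ] at this
    push_neg at this
    exact this i hi
  refine ⟨i, hi, ?_⟩
  rw [Finsupp.add_apply] at hile
  omega

end Aux8
/-- Bound on the number of zeros of a standard polynomial `f` in terms of
the exponents of its leading monomial, when `in_≺(I(𝕏)) = (t_2^{d_2}, …, t_s^{d_s})`. -/
theorem card_zeros_le_of_initial_ci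
    {K : Type*} [Field K] {s : ℕ} (hs : 2 ≤ s)
    (𝕏 : Set (Projectivization K (Fin s → K))) (hfin : 𝕏.Finite)
    (m : MonomialOrder (Fin s)) (hm : IsGradedOrder m)
    (d : Fin s → ℕ)
    (hinit : initIdeal K m (vanishingIdeal K 𝕏) = Ideal.span
      { g | ∃ i : Fin s, (i : ℕ) ≠ 0 ∧ g = (X i : MvPolynomial (Fin s) K) ^ d i })
    (dd : ℕ) (hdd : 1 ≤ dd) (f : MvPolynomial (Fin s) K)
    (hf : f ∈ Fset K m (vanishingIdeal K 𝕏) dd) :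
    ∃ r : Fin s, (r : ℕ) ≠ 0 ∧ 1 ≤ lExp K m f r ∧
      (∀ i, r ≤ i → lExp K m f i ≤ d i - 1) ∧
      (∀ i : Fin s, (i : ℕ) ≠ 0 → i < r → lExp K m f i = 0) ∧
      (VX K 𝕏 f).ncard ≤
        (∏ i ∈ Finset.univ.filter (fun i : Fin s => (i : ℕ) ≠ 0), d i) -
          ∏ i ∈ Finset.univ.filter (fun i : Fin s => (i : ℕ) ≠ 0), (d i - lExp K m f i) := by
  classical
  have hs0 : 0 < s := by omega
  obtain ⟨hf0, hfstd, hzd⟩ := hf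
  have hf' : f ∈ Fset K m (vanishingIdeal K 𝕏) dd := ⟨hf0, hfstd, hzd⟩
  have monJ : ∀ b : Fin s →₀ ℕ,
      MvPolynomial.monomial b (1 : K) ∈ initIdeal K m (vanishingIdeal K 𝕏)
        ↔ ∃ i : Fin s, (i : ℕ) ≠ 0 ∧ d i ≤ b i := by
    intro b
    rw [hinit]
    exact monomial_mem_span_pow_iff
  -- a := lExp f is standard
  have hamem : lExp K m f ∈ f.support := lExp_mem_support hf0
  have astd : ∀ i : Fin s, (i : ℕ) ≠ 0 → lExp K m f i < d i := by
    intro i hi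
    have := (hfstd _ hamem).2
    rw [monJ] at this
    push_neg at this
    exact this i hi
  -- all the d i are positive
  have hd : ∀ i : Fin s, (i : ℕ) ≠ 0 → 1 ≤ d i := by
    intro i hi
    have := astd i hi
    omega
  -- existence of a positive exponent at a nonzero index
  obtain ⟨i₁, hi₁, hi₁pos⟩ := exists_pos_lExp hinit hf'
  -- r := least such index
  set rset : Finset (Fin s) :=
    Finset.univ.filter (fun i : Fin s => (i : ℕ) ≠ 0 ∧ 1 ≤ lExp K m f i) with hrset
  have hrne : rset.Nonempty := ⟨i₁, Finset.mem_filter.mpr ⟨Finset.mem_univ _, hi₁, hi₁pos⟩⟩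
  set r : Fin s := rset.min' hrne with hr
  have hrmem := Finset.mem_filter.mp (rset.min'_mem hrne)
  refine ⟨r, hrmem.2.1, hrmem.2.2, ?_, ?_, ?_⟩
  · intro i hri
    have hi : (i : ℕ) ≠ 0 := by
      have h1 : (r : ℕ) ≤ (i : ℕ) := hri
      have h2 : (r : ℕ) ≠ 0 := hrmem.2.1
      omega
    have := astd i hi
    omega
  · intro i hi hir
    by_contra hne
    have hpos : 1 ≤ lExp K m f i := by omega
    have : i ∈ rset := Finset.mem_filter.mpr ⟨Finset.mem_univ _, hi, hpos⟩
    have := rset.min'_le i this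
    exact absurd hir (not_lt.mpr this)
  · have hXcard := ncard_le_prod hs0 hfin hinit hd
    have hWcard := prod_le_ncard_nonzeros hs0 hfin hinit hf'
    have hVsub : VX K 𝕏 f ⊆ 𝕏 := fun p hp => hp.1
    have hVfin : (VX K 𝕏 f).Finite := hfin.subset hVsub
    have hdiff : (𝕏 \ VX K 𝕏 f).ncard = 𝕏.ncard - (VX K 𝕏 f).ncard :=
      Set.ncard_diff hVsub hVfin
    have hVle : (VX K 𝕏 f).ncard ≤ 𝕏.ncard := Set.ncard_le_ncard hVsub hfin
    rw [hdiff] at hWcard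
    omega

end MDF
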